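/- The subgroup Γ_L of SL(2,ℝ) generated by the matrices {A n, B n : n ∈ ℤ} is not finitely generated: there is no finite subset of SL(2,ℝ) generating Γ_L. -/

import Mathlib

open UpperHalfPlane MatrixGroups

noncomputable section

/-- The generator `A n = !![8n+4, −(1+8n(8n+4)); 1, −8n]` of the Loch Ness monster group. -/
def A (n : ℤ) : SL(2, ℝ) :=
  ⟨!![8 * (n : ℝ) + 4, -(1 + 8 * (n : ℝ) * (8 * (n : ℝ) + 4)); 1, -(8 * (n : ℝ))], by
    rw [Matrix.det_fin_two_of]; ring⟩

/-- The generator `B n = !![8n+6, −1−(8n+2)(8n+6); 1, −(8n+2)]` of the Loch Ness monster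
group. -/
def B (n : ℤ) : SL(2, ℝ) :=
  ⟨!![8 * (n : ℝ) + 6, -1 - (8 * (n : ℝ) + 2) * (8 * (n : ℝ) + 6); 1, -(8 * (n : ℝ) + 2)], by
    rw [Matrix.det_fin_two_of]; ring⟩

/-- The subgroup of `SL(2,ℝ)` generated by the `A n` and `B n`, `n ∈ ℤ`. -/
def ΓL : Subgroup SL(2, ℝ) := Subgroup.closure (Set.range A ∪ Set.range B)

def M (k : ℤ) : SL(2, ℝ) :=
  ⟨!![(k:ℝ)+4, -1-(k:ℝ)*((k:ℝ)+4); 1, -(k:ℝ)], by rw [Matrix.det_fin_two_of]; ring⟩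

def Minv (k : ℤ) : SL(2, ℝ) :=
  ⟨!![-(k:ℝ), 1+(k:ℝ)*((k:ℝ)+4); -1, (k:ℝ)+4], by rw [Matrix.det_fin_two_of]; ring⟩

lemma M_inv (k : ℤ) : (M k)⁻¹ = Minv k := by
  apply inv_eq_of_mul_eq_one_right
  apply Subtype.ext
  show (M k).1 * (Minv k).1 = 1
  rw [show (M k).1 = !![(k:ℝ)+4, -1-(k:ℝ)*((k:ℝ)+4); 1, -(k:ℝ)] from rfl,
    show (Minv k).1 = !![-(k:ℝ), 1+(k:ℝ)*((k:ℝ)+4); -1, (k:ℝ)+4] from rfl,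
    Matrix.mul_fin_two, Matrix.one_fin_two]
  congr 1 <;> ring_nf

def act (g : SL(2, ℝ)) (v : ℝ × ℝ) : ℝ × ℝ :=
  (g.1 0 0 * v.1 + g.1 0 1 * v.2, g.1 1 0 * v.1 + g.1 1 1 * v.2)

lemma act_mul (g h : SL(2, ℝ)) (v : ℝ × ℝ) : act (g * h) v = act g (act h v) := by
  simp only [act, Matrix.SpecialLinearGroup.coe_mul, Matrix.mul_apply, Fin.sum_univ_two,
    Prod.mk.injEq]
  constructor <;> ring

def InC (t : ℝ) (v : ℝ × ℝ) : Prop := (v.1 - t * v.2)^2 < v.2^2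

lemma cross {t t' : ℝ} (h : 4 ≤ (t - t')^2) {v : ℝ × ℝ} (hv : InC t v) :
    v.2^2 < (v.1 - t' * v.2)^2 := by
  unfold InC at hv
  nlinarith [sq_nonneg (v.1 - t*v.2), sq_nonneg ((t-t')*v.2 + 2*(v.1 - t*v.2)),
    sq_nonneg ((t-t')*v.2 - 2*(v.1 - t*v.2)), sq_nonneg v.2]

lemma ping_M (k : ℤ) {v : ℝ × ℝ} (hv : v.2^2 < (v.1 - (k:ℝ) * v.2)^2) :
    InC ((k:ℝ)+4) (act (M k) v) := by
  have e0 : act (M k) v = (((k:ℝ)+4) * v.1 + (-1-(k:ℝ)*((k:ℝ)+4)) * v.2,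
      1 * v.1 + (-(k:ℝ)) * v.2) := rfl
  unfold InC
  rw [e0]
  have e1 : ((k:ℝ)+4) * v.1 + (-1-(k:ℝ)*((k:ℝ)+4)) * v.2
      - ((k:ℝ)+4) * (1 * v.1 + (-(k:ℝ)) * v.2) = -v.2 := by ring
  have e2 : 1 * v.1 + (-(k:ℝ)) * v.2 = v.1 - (k:ℝ) * v.2 := by ring
  rw [e1, e2]
  simpa using hv

lemma ping_Minv (k : ℤ) {v : ℝ × ℝ} (hv : v.2^2 < (v.1 - ((k:ℝ)+4) * v.2)^2) :
    InC (k:ℝ) (act (M k)⁻¹ v) := by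
  rw [M_inv]
  have e0 : act (Minv k) v = ((-(k:ℝ)) * v.1 + (1+(k:ℝ)*((k:ℝ)+4)) * v.2,
      (-1) * v.1 + ((k:ℝ)+4) * v.2) := rfl
  unfold InC
  rw [e0]
  have e1 : (-(k:ℝ)) * v.1 + (1+(k:ℝ)*((k:ℝ)+4)) * v.2
      - (k:ℝ) * ((-1) * v.1 + ((k:ℝ)+4) * v.2) = v.2 := by ring
  have e2 : ((-1) * v.1 + ((k:ℝ)+4) * v.2)^2 = (v.1 - ((k:ℝ)+4) * v.2)^2 := by ring
  rw [e1, e2]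
  exact hv

/-- attracting center of a letter -/
def attC (k : ℤ) (b : Bool) : ℤ := k + cond b 4 0
/-- repelling center of a letter -/
def repC (k : ℤ) (b : Bool) : ℤ := k + cond b 0 4

lemma ping_gen (k : ℤ) (b : Bool) {v : ℝ × ℝ}
    (hv : v.2^2 < (v.1 - ((repC k b : ℤ):ℝ) * v.2)^2) :
    InC ((attC k b : ℤ):ℝ) (act (cond b (M k) (M k)⁻¹) v) := by
  cases b
  · simp only [attC, repC, cond] at *
    push_cast at hv ⊢
    simpa using ping_Minv k (by push_cast; simpa using hv)
  · simp only [attC, repC, cond] at *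
    push_cast at hv ⊢
    simpa using ping_M k (by push_cast; simpa using hv)

lemma arith {a b : ℤ} (ha : a % 8 = 0 ∨ a % 8 = 2) (hb : b % 8 = 0 ∨ b % 8 = 2)
    (bp bq : Bool) (hne : ¬(b = a ∧ bq = !bp)) :
    4 ≤ ((repC a bp - attC b bq : ℤ):ℝ)^2 := by
  have h2 : 2 ≤ repC a bp - attC b bq ∨ repC a bp - attC b bq ≤ -2 := by
    cases bp <;> cases bq <;> simp [repC, attC] at hne ⊢ <;> omega
  have : (4:ℤ) ≤ (repC a bp - attC b bq)^2 := by
    rcases h2 with h | h <;> nlinarith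
  exact_mod_cast this

lemma chain_of_red {α : Type*} (L : List (α × Bool))
    (h : ∀ L2 x b L3, L ≠ L2 ++ (x,b)::(x,!b)::L3) :
    L.Chain' (fun p q => ¬(q.1 = p.1 ∧ q.2 = !p.2)) := by
  induction L with
  | nil => exact List.IsChain.nil
  | cons p L ih =>
    cases L with
    | nil => exact List.IsChain.singleton _
    | cons q L' =>
      refine List.IsChain.cons_cons ?_ (ih ?_)
      · rintro ⟨h1, h2⟩
        refine h [] p.1 p.2 L' ?_
        have hq : q = (p.1, !p.2) := by
          cases q; cases p; simp_all
        rw [hq]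
        simp
      · intro L2 x b L3 hL
        exact h (p::L2) x b L3 (by rw [hL]; simp)

lemma ping_word {s : Set ℤ} (hs : ∀ k ∈ s, k % 8 = 0 ∨ k % 8 = 2)
    (L : List ({k : ℤ // k ∈ s} × Bool))
    (hch : L.Chain' (fun p q => ¬(q.1 = p.1 ∧ q.2 = !p.2))) :
    ∀ p L', L = p :: L' →
      InC ((attC p.1.1 p.2 : ℤ):ℝ)
        (act ((L.map fun x => cond x.2 (M x.1.1) (M x.1.1)⁻¹).prod) ((1:ℝ), (0:ℝ))) := by
  induction L with
  | nil => intro p L' h; exact absurd h (by simp)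
  | cons q T ih =>
    intro p L' hpl
    injection hpl with h1 h2
    subst h1; subst h2
    cases T with
    | nil =>
      simp only [List.map_cons, List.map_nil, List.prod_cons, List.prod_nil, mul_one]
      apply ping_gen
      simp
    | cons r T' =>
      have hch' : (r :: T').Chain' (fun p q => ¬(q.1 = p.1 ∧ q.2 = !p.2)) := hch.tail
      have hrel : ¬(r.1 = q.1 ∧ r.2 = !q.2) := (List.isChain_cons_cons.mp hch).1
      have ihr := ih hch' r T' rfl
      simp only [List.map_cons, List.prod_cons] at ihr ⊢
      rw [act_mul]
      apply ping_gen
      refine cross ?_ ihr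
      have hne' : ¬(r.1.1 = q.1.1 ∧ r.2 = !q.2) := by
        rintro ⟨h1, h2⟩; exact hrel ⟨Subtype.ext h1, h2⟩
      have h4 := arith (hs q.1.1 q.1.2) (hs r.1.1 r.1.2) q.2 r.2 hne'
      push_cast at h4 ⊢
      nlinarith [h4]

lemma A_ne_one (m : ℤ) : M (8*m) ≠ 1 := by
  intro h
  have := congrArg (fun g : SL(2,ℝ) => g.1 1 0) h
  simp only [M] at this
  rw [show (1 : SL(2,ℝ)).1 = (1 : Matrix (Fin 2) (Fin 2) ℝ) from rfl, Matrix.one_fin_two] at this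
  simpa using this

lemma key {s : Set ℤ} (hs : ∀ k ∈ s, k % 8 = 0 ∨ k % 8 = 2) {m : ℤ} (hm : 8*m ∉ s) :
    M (8*m) ∉ Subgroup.closure {g | ∃ k ∈ s, g = M k} := by
  intro hmem
  have hrange : Set.range (fun k : {k // k ∈ s} => M k.1) = {g | ∃ k ∈ s, g = M k} := by
    ext g
    constructor
    · rintro ⟨⟨k, hk⟩, rfl⟩; exact ⟨k, hk, rfl⟩
    · rintro ⟨k, hk, rfl⟩; exact ⟨⟨k, hk⟩, rfl⟩
  rw [← hrange, ← FreeGroup.range_lift_eq_closure] at hmem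
  obtain ⟨w, hw⟩ := hmem
  have hw' : M (8*m) = ((w.toWord).map fun x =>
      cond x.2 (M x.1.1) (M x.1.1)⁻¹).prod := by
    conv_lhs => rw [← hw, ← FreeGroup.mk_toWord (x := w)]
    rw [FreeGroup.lift_mk]
  cases hL : w.toWord with
  | nil => exact A_ne_one m (by rw [hw', hL]; simp)
  | cons p L' =>
    have hred : ∀ L2 x b L3, w.toWord ≠ L2 ++ (x,b)::(x,!b)::L3 := by
      intro L2 x b L3 h
      exact FreeGroup.reduce.not (p := False) ((FreeGroup.reduce_toWord w).trans h)
    have hch := chain_of_red w.toWord hred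
    have hping := ping_word hs w.toWord hch p L' hL
    rw [← hw'] at hping
    -- act (M (8m)) (1,0) = (8m+4, 1)
    have hact : act (M (8*m)) ((1:ℝ), (0:ℝ)) = ((8*(m:ℝ)+4), 1) := by
      simp only [act, M]
      norm_num
    rw [hact] at hping
    unfold InC at hping
    norm_num at hping
    set t : ℤ := attC p.1.1 p.2 with ht
    have h3 : t = 8*m+4 := by
      have h1 : |(8*(m:ℝ)+4 - (t:ℝ))| < 1 := hping
      have h2 : |(8*m+4 - t : ℤ)| < 1 := by exact_mod_cast h1
      have h3 := abs_lt.mp h2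
      omega
    have hk := hs p.1.1 p.1.2
    have : p.1.1 + cond p.2 4 0 = 8*m+4 := h3
    cases hp2 : p.2 <;> rw [hp2] at this <;> simp at this
    · omega
    · exact hm (this ▸ p.1.2)

lemma A_eq_M (n : ℤ) : A n = M (8*n) := by
  apply Subtype.ext
  show _ = (M (8*n)).1
  simp only [A, M]
  push_cast
  congr 1 <;> ring_nf

lemma closure_finite {G : Type*} [Group G] {X : Set G} {g : G}
    (hg : g ∈ Subgroup.closure X) :
    ∃ T : Set G, T ⊆ X ∧ T.Finite ∧ g ∈ Subgroup.closure T := by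
  refine Subgroup.closure_induction ?_ ?_ ?_ ?_ hg
  · intro x hx
    exact ⟨{x}, by simpa using hx, Set.finite_singleton x,
      Subgroup.subset_closure (Set.mem_singleton x)⟩
  · exact ⟨∅, by simp, Set.finite_empty, Subgroup.one_mem _⟩
  · rintro x y _ _ ⟨T1, hT1, hf1, hx⟩ ⟨T2, hT2, hf2, hy⟩
    exact ⟨T1 ∪ T2, Set.union_subset hT1 hT2, hf1.union hf2,
      Subgroup.mul_mem _ (Subgroup.closure_mono Set.subset_union_left hx)
        (Subgroup.closure_mono Set.subset_union_right hy)⟩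
  · rintro x _ ⟨T, hT, hf, hx⟩
    exact ⟨T, hT, hf, Subgroup.inv_mem _ hx⟩

lemma M_injective : Function.Injective M := by
  intro a b h
  have := congrArg (fun g : SL(2,ℝ) => g.1 1 1) h
  simp only [M] at this
  have : -(a:ℝ) = -(b:ℝ) := by simpa using this
  exact_mod_cast neg_injective this

lemma B_eq_M (n : ℤ) : B n = M (8*n+2) := by
  apply Subtype.ext
  show _ = (M (8*n+2)).1
  simp only [B, M]
  push_cast
  congr 1 <;> ring_nf

def s0 : Set ℤ := {k | k % 8 = 0 ∨ k % 8 = 2}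

lemma gens_eq : Set.range A ∪ Set.range B = {g | ∃ k ∈ s0, g = M k} := by
  ext g
  constructor
  · rintro (⟨n, rfl⟩ | ⟨n, rfl⟩)
    · exact ⟨8*n, by simp only [s0, Set.mem_setOf_eq]; omega, A_eq_M n⟩
    · exact ⟨8*n+2, by simp only [s0, Set.mem_setOf_eq]; omega, B_eq_M n⟩
  · rintro ⟨k, hk, rfl⟩
    rcases hk with h | h
    · obtain ⟨n, rfl⟩ : ∃ n, k = 8*n := ⟨k/8, by omega⟩
      exact Or.inl ⟨n, A_eq_M n⟩
    · obtain ⟨n, rfl⟩ : ∃ n, k = 8*n+2 := ⟨k/8, by omega⟩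
      exact Or.inr ⟨n, B_eq_M n⟩

/-- `Γ_L` is not finitely generated. -/
theorem stmt_4 : ¬ ∃ F : Set SL(2, ℝ), F.Finite ∧ Subgroup.closure F = ΓL := by

  rintro ⟨F, hFfin, hF⟩
  have hX : ΓL = Subgroup.closure {g | ∃ k ∈ s0, g = M k} := by
    rw [ΓL, gens_eq]
  have h1 : ∀ f ∈ F, f ∈ Subgroup.closure {g | ∃ k ∈ s0, g = M k} := by
    intro f hf
    rw [← hX, ← hF]
    exact Subgroup.subset_closure hf
  have h2 : ∀ f : F, ∃ T, T ⊆ {g | ∃ k ∈ s0, g = M k} ∧ T.Finite ∧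
      (f : SL(2,ℝ)) ∈ Subgroup.closure T := fun f => closure_finite (h1 f f.2)
  choose T hT1 hT2 hT3 using h2
  haveI := hFfin.to_subtype
  set U : Set SL(2,ℝ) := ⋃ f : F, T f with hU
  have hUfin : U.Finite := Set.finite_iUnion hT2
  have hUX : U ⊆ {g | ∃ k ∈ s0, g = M k} := Set.iUnion_subset hT1
  set sU : Set ℤ := M ⁻¹' U with hsU
  have hsUfin : sU.Finite := hUfin.preimage M_injective.injOn
  have hsUres : ∀ k ∈ sU, k % 8 = 0 ∨ k % 8 = 2 := by
    intro k hk
    obtain ⟨k', hk', he⟩ := hUX hk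
    exact M_injective he ▸ hk'
  have hUsub : U ⊆ {g | ∃ k ∈ sU, g = M k} := by
    intro g hg
    obtain ⟨k, _, rfl⟩ := hUX hg
    exact ⟨k, hg, rfl⟩
  have hle : ΓL ≤ Subgroup.closure {g | ∃ k ∈ sU, g = M k} := by
    rw [← hF]
    rw [Subgroup.closure_le]
    intro f hf
    exact Subgroup.closure_mono (subset_trans (fun x hx => Set.mem_iUnion.mpr ⟨⟨f, hf⟩, hx⟩)
      hUsub) (hT3 ⟨f, hf⟩)
  have hpre : ((fun m : ℤ => 8*m) ⁻¹' sU).Finite :=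
    hsUfin.preimage (fun a _ b _ h => by omega)
  obtain ⟨m, hm⟩ := hpre.infinite_compl.nonempty
  have hmem : A m ∈ ΓL := Subgroup.subset_closure (Or.inl ⟨m, rfl⟩)
  have : M (8*m) ∈ Subgroup.closure {g | ∃ k ∈ sU, g = M k} := by
    rw [← A_eq_M]
    exact hle hmem
  exact key hsUres hm this
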